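/- Define g : [0,1] → ℝ by g(x) = x³ − 1.67 x² + 0.67 x. Then g(0) = 0, g(1) = 0, −D*^{1.2} g(x) ≥ 0 for all x ∈ (0,1), and yet g(0.8) < 0. (Hence Dirichlet boundary conditions alone do not yield a comparison principle for the operator −D*^{1.2} on [0,1].) -/

import Mathlib

/-- The Caputo fractional derivative of order `δ ∈ (1,2)` of a (globally) twice
differentiable function `g`:  `D*^δ g (x) = (1/Γ(2-δ)) ∫₀ˣ (x-t)^(1-δ) g''(t) dt`. -/
noncomputable def caputoG (δ : ℝ) (g : ℝ → ℝ) (x : ℝ) : ℝ :=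
  (1 / Real.Gamma (2 - δ)) *
    ∫ t in (0:ℝ)..x, (x - t) ^ (1 - δ) * deriv (deriv g) t

/-- The counterexample function `g(x) = x³ − 1.67 x² + 0.67 x`. -/
noncomputable def gEx : ℝ → ℝ := fun x => x ^ 3 - 1.67 * x ^ 2 + 0.67 * x

lemma deriv_gEx : deriv gEx = fun x => 3 * x ^ 2 - 3.34 * x + 0.67 := by
  funext x
  have h : HasDerivAt gEx (3 * x ^ 2 - 3.34 * x + 0.67) x := by
    have := (((hasDerivAt_pow 3 x).sub ((hasDerivAt_pow 2 x).const_mul 1.67)).add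
      ((hasDerivAt_id x).const_mul 0.67))
    have this : HasDerivAt gEx _ x := this
    convert this using 1
    push_cast; ring
  exact h.deriv

lemma deriv2_gEx : deriv (deriv gEx) = fun t => 6 * t - 3.34 := by
  rw [deriv_gEx]
  funext x
  have h : HasDerivAt (fun x : ℝ => 3 * x ^ 2 - 3.34 * x + 0.67) (6 * x - 3.34) x := by
    have := (((hasDerivAt_pow 2 x).const_mul 3).sub ((hasDerivAt_id x).const_mul 3.34)).add_const 0.67
    have this : HasDerivAt (fun x : ℝ => 3 * x ^ 2 - 3.34 * x + 0.67) _ x := this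
    convert this using 1
    push_cast; ring
  exact h.deriv

lemma integrable_rpow_sub (x p : ℝ) (hp : -1 < p) :
    IntervalIntegrable (fun t => (x - t) ^ p) MeasureTheory.volume 0 x := by
  have h := (intervalIntegral.intervalIntegrable_rpow' (a := 0) (b := x) hp).comp_sub_left x
  simpa using h.symm

lemma int_rpow_sub (x p : ℝ) (hx : 0 < x) (hp : -1 < p) :
    ∫ t in (0:ℝ)..x, (x - t) ^ p = x ^ (p + 1) / (p + 1) := by
  have h := intervalIntegral.integral_comp_sub_left (a := (0:ℝ)) (b := x)
    (fun s => s ^ p) x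
  simp only [sub_self, sub_zero] at h
  rw [h, integral_rpow (Or.inl hp), Real.zero_rpow (by linarith)]
  ring

theorem stmt3 :
    gEx 0 = 0 ∧ gEx 1 = 0 ∧
    (∀ x ∈ Set.Ioo (0:ℝ) 1, 0 ≤ -caputoG 1.2 gEx x) ∧
    gEx 0.8 < 0 := by
  refine ⟨by norm_num [gEx], by norm_num [gEx], ?_, by norm_num [gEx]⟩
  intro x hx
  obtain ⟨hx0, hx1⟩ := hx
  have hΓ : 0 < Real.Gamma (2 - 1.2) := Real.Gamma_pos_of_pos (by norm_num)
  -- rewrite integrand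
  have hcongr : ∫ t in (0:ℝ)..x, (x - t) ^ ((1:ℝ) - 1.2) * deriv (deriv gEx) t
      = ∫ t in (0:ℝ)..x, ((6 * x - 3.34) * (x - t) ^ (-0.2 : ℝ) - 6 * (x - t) ^ (0.8 : ℝ)) := by
    rw [deriv2_gEx]
    apply intervalIntegral.integral_congr
    intro t ht
    rw [Set.uIcc_of_le hx0.le] at ht
    obtain ⟨ht0, htx⟩ := ht
    rcases eq_or_lt_of_le htx with h | h
    · subst h
      simp [Real.zero_rpow]
      norm_num
    · have hpos : (0:ℝ) < x - t := by linarith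
      have h8 : (x - t) ^ (0.8 : ℝ) = (x - t) ^ (-0.2 : ℝ) * (x - t) := by
        rw [← Real.rpow_add_one (ne_of_gt hpos)]
        norm_num
      have h12 : ((1:ℝ) - 1.2) = (-0.2 : ℝ) := by norm_num
      dsimp only
      rw [h12, h8]
      ring
  have hi1 : IntervalIntegrable (fun t => (x - t) ^ (-0.2 : ℝ)) MeasureTheory.volume 0 x :=
    integrable_rpow_sub x _ (by norm_num)
  have hi2 : IntervalIntegrable (fun t => (x - t) ^ (0.8 : ℝ)) MeasureTheory.volume 0 x :=
    integrable_rpow_sub x _ (by norm_num)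
  have hval : ∫ t in (0:ℝ)..x, ((6 * x - 3.34) * (x - t) ^ (-0.2 : ℝ) - 6 * (x - t) ^ (0.8 : ℝ))
      = (6 * x - 3.34) * (x ^ (0.8:ℝ) / 0.8) - 6 * (x ^ (1.8:ℝ) / 1.8) := by
    rw [intervalIntegral.integral_sub (hi1.const_mul _) (hi2.const_mul _),
      intervalIntegral.integral_const_mul, intervalIntegral.integral_const_mul,
      int_rpow_sub x _ hx0 (by norm_num), int_rpow_sub x _ hx0 (by norm_num)]
    norm_num
  have hx8 : (0:ℝ) < x ^ (0.8:ℝ) := Real.rpow_pos_of_pos hx0 _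
  have hx18 : x ^ (1.8:ℝ) = x ^ (0.8:ℝ) * x := by
    rw [← Real.rpow_add_one (ne_of_gt hx0)]
    norm_num
  have hneg : (6 * x - 3.34) * (x ^ (0.8:ℝ) / 0.8) - 6 * (x ^ (1.8:ℝ) / 1.8) ≤ 0 := by
    rw [hx18]
    have hfac : (6 * x - 3.34) * (x ^ (0.8:ℝ) / 0.8) - 6 * (x ^ (0.8:ℝ) * x / 1.8)
        = x ^ (0.8:ℝ) * ((25/6) * x - 4.175) := by ring
    rw [hfac]
    apply mul_nonpos_of_nonneg_of_nonpos hx8.le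
    linarith
  unfold caputoG
  rw [hcongr, hval]
  have : 0 < 1 / Real.Gamma (2 - 1.2) := by positivity
  nlinarith [this, hneg]
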